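/- For all positive integers k and l, the greatest common divisor (in the polynomial ring ℚ[q], up to units) of the polynomials S_{k−1}(q) and S_{l−1}(q) is S_{gcd(k,l)−1}(q). -/

import Mathlib

noncomputable def SP : ℕ → Polynomial ℚ
  | 0 => 1
  | 1 => Polynomial.X
  | (n + 2) => Polynomial.X * SP (n + 1) - SP n

open Polynomial
local notation "egcd" => EuclideanDomain.gcd

lemma SP_add (b : ℕ) : ∀ a, SP (a + b + 2) = SP (a + 1) * SP (b + 1) - SP a * SP b := by
  induction b using Nat.twoStepInduction with
  | zero => intro a; show SP (a + 2) = _; rw [SP]; simp [SP]; ring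
  | one =>
    intro a
    show SP (a + 3) = SP (a + 1) * SP 2 - SP a * SP 1
    have h3 : SP (a + 3) = X * SP (a + 2) - SP (a + 1) := by rw [SP]
    have h2 : SP (a + 2) = X * SP (a + 1) - SP a := by rw [SP]
    rw [h3, h2]
    show _ = SP (a+1) * (X * SP 1 - SP 0) - SP a * X
    simp only [SP]
    ring
  | more n ih1 ih2 =>
    intro a
    have h : SP (a + (n + 2) + 2) = X * SP (a + (n+1) + 2) - SP (a + n + 2) := by
      have : a + (n + 2) + 2 = (a + n + 2) + 2 := by ring
      rw [this, SP]
      norm_num [show a + n + 2 + 1 = a + (n + 1) + 2 by omega]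
    rw [h, ih2 a, ih1 a]
    have hs3 : SP (n + 2 + 1) = X * SP (n + 1 + 1) - SP (n + 1) := by
      rw [show n + 2 + 1 = n + 1 + 2 from rfl, SP]
    have hs2 : SP (n + 1 + 1) = X * SP (n + 1) - SP n := by
      rw [show n + 1 + 1 = n + 2 from rfl, SP]
    rw [hs3, hs2]; ring

lemma SP_coprime : ∀ n, IsCoprime (SP n) (SP (n + 1)) := by
  intro n
  induction n with
  | zero => exact isCoprime_one_left
  | succ m ih =>
    have h : SP (m + 2) = -SP m + SP (m + 1) * X := by rw [SP]; ring
    rw [h]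
    exact ((ih.symm.neg_right).add_mul_left_right X)

lemma gcd_step (a c d e : Polynomial ℚ) (h : IsCoprime d a) :
    Associated (egcd a (a * c - d * e)) (egcd a e) := by
  apply associated_of_dvd_dvd
  · apply EuclideanDomain.dvd_gcd (EuclideanDomain.gcd_dvd_left _ _)
    have g1 : egcd a (a * c - d * e) ∣ a := EuclideanDomain.gcd_dvd_left _ _
    have g2 : egcd a (a * c - d * e) ∣ a * c - d * e := EuclideanDomain.gcd_dvd_right _ _
    have g3 : egcd a (a * c - d * e) ∣ d * e := by
      have h4 : egcd a (a * c - d * e) ∣ a * c - (a * c - d * e) :=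
        dvd_sub (g1.mul_right c) g2
      simpa using h4
    have hc : IsCoprime d (egcd a (a * c - d * e)) :=
      h.of_isCoprime_of_dvd_right g1
    exact hc.symm.dvd_of_dvd_mul_left g3
  · apply EuclideanDomain.dvd_gcd (EuclideanDomain.gcd_dvd_left _ _)
    exact dvd_sub ((EuclideanDomain.gcd_dvd_left a e).mul_right c) ((EuclideanDomain.gcd_dvd_right a e).mul_left d)

lemma egcd_comm (a b : Polynomial ℚ) : Associated (egcd a b) (egcd b a) :=
  associated_of_dvd_dvd (EuclideanDomain.dvd_gcd (EuclideanDomain.gcd_dvd_right _ _) (EuclideanDomain.gcd_dvd_left _ _))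
    (EuclideanDomain.dvd_gcd (EuclideanDomain.gcd_dvd_right _ _) (EuclideanDomain.gcd_dvd_left _ _))

lemma main : ∀ n k l, k + l = n → 0 < k → 0 < l →
    Associated (egcd (SP (k - 1)) (SP (l - 1))) (SP (Nat.gcd k l - 1)) := by
  intro n
  induction n using Nat.strong_induction_on with
  | _ n ih =>
    intro k l hn hk hl
    rcases eq_or_lt_of_le (show 1 ≤ k from hk) with h1 | h2
    · -- k = 1
      have hk1 : k = 1 := h1.symm
      subst hk1
      have : egcd (SP 0) (SP (l - 1)) ∣ SP 0 := EuclideanDomain.gcd_dvd_left _ _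
      simp only [SP, Nat.gcd_one_left] at *
      exact associated_one_iff_isUnit.mpr (isUnit_of_dvd_one this)
    rcases eq_or_lt_of_le (show 1 ≤ l from hl) with h1' | h2'
    · -- l = 1
      have hl1 : l = 1 := h1'.symm
      subst hl1
      have : egcd (SP (k - 1)) (SP 0) ∣ SP 0 := EuclideanDomain.gcd_dvd_right _ _
      simp only [SP, Nat.gcd_one_right] at *
      exact associated_one_iff_isUnit.mpr (isUnit_of_dvd_one this)
    rcases lt_trichotomy k l with hkl | hkl | hkl
    · -- k < l, k ≥ 2
      have key : SP (l - 1) = SP (k - 1) * SP (l - k) - SP (k - 2) * SP (l - k - 1) := by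
        have := SP_add (l - k - 1) (k - 2)
        have e1 : k - 2 + (l - k - 1) + 2 = l - 1 := by omega
        have e2 : k - 2 + 1 = k - 1 := by omega
        have e3 : l - k - 1 + 1 = l - k := by omega
        rw [e1, e2, e3] at this
        exact this
      have hcop : IsCoprime (SP (k - 2)) (SP (k - 1)) := by
        have := SP_coprime (k - 2)
        have e : k - 2 + 1 = k - 1 := by omega
        rwa [e] at this
      have step : Associated (egcd (SP (k - 1)) (SP (l - 1))) (egcd (SP (k-1)) (SP (l - k - 1))) := by
        rw [key]
        exact gcd_step _ _ _ _ hcop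
      have hrec : Associated (egcd (SP (k - 1)) (SP ((l - k) - 1))) (SP (Nat.gcd k (l - k) - 1)) :=
        ih (k + (l - k)) (by omega) k (l - k) rfl hk (by omega)
      have hg : Nat.gcd k (l - k) = Nat.gcd k l := Nat.gcd_sub_self_right (le_of_lt hkl)
      rw [hg] at hrec
      exact step.trans hrec
    · subst hkl
      rw [Nat.gcd_self]
      exact associated_of_dvd_dvd (EuclideanDomain.gcd_dvd_left _ _) (EuclideanDomain.dvd_gcd dvd_rfl dvd_rfl)
    · -- l < k
      have key : SP (k - 1) = SP (l - 1) * SP (k - l) - SP (l - 2) * SP (k - l - 1) := by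
        have := SP_add (k - l - 1) (l - 2)
        have e1 : l - 2 + (k - l - 1) + 2 = k - 1 := by omega
        have e2 : l - 2 + 1 = l - 1 := by omega
        have e3 : k - l - 1 + 1 = k - l := by omega
        rw [e1, e2, e3] at this
        exact this
      have hcop : IsCoprime (SP (l - 2)) (SP (l - 1)) := by
        have := SP_coprime (l - 2)
        have e : l - 2 + 1 = l - 1 := by omega
        rwa [e] at this
      have step : Associated (egcd (SP (l - 1)) (SP (k - 1))) (egcd (SP (l-1)) (SP (k - l - 1))) := by
        rw [key]
        exact gcd_step _ _ _ _ hcop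
      have hrec : Associated (egcd (SP (l - 1)) (SP ((k - l) - 1))) (SP (Nat.gcd l (k - l) - 1)) :=
        ih (l + (k - l)) (by omega) l (k - l) rfl hl (by omega)
      have hg : Nat.gcd l (k - l) = Nat.gcd k l := by
        rw [Nat.gcd_sub_self_right (le_of_lt hkl), Nat.gcd_comm]
      rw [hg] at hrec
      exact ((egcd_comm _ _).trans step).trans hrec

theorem stmt_14 (k l : ℕ) (hk : 0 < k) (hl : 0 < l) :
    Associated (EuclideanDomain.gcd (SP (k - 1)) (SP (l - 1)))
      (SP (Nat.gcd k l - 1)) := by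
  exact main (k + l) k l rfl hk hl
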